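/- If a bounded linear operator T : H → Y from a Hilbert space to a Banach space maps every orthonormal sequence of H onto a limited subset of Y, then T is a limited operator, i.e., T(B_H) is limited in Y. -/

import Mathlib

open Filter

/-- A subset `A` of a normed space is limited if every weak*-null sequence of functionals
converges to `0` uniformly on `A`. -/
def IsLimited (𝕜 : Type*) [RCLike 𝕜] {X : Type*} [NormedAddCommGroup X]
    [NormedSpace 𝕜 X] (A : Set X) : Prop :=
  ∀ f : ℕ → X →L[𝕜] 𝕜, (∀ x : X, Tendsto (fun n => f n x) atTop (nhds 0)) →
    ∀ ε > (0 : ℝ), ∃ N : ℕ, ∀ n ≥ N, ∀ a ∈ A, ‖f n a‖ < ε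


/-- Invariant for the recursive Gram–Schmidt selection. -/
def GSInv (𝕜 : Type*) [RCLike 𝕜] {H : Type*} [NormedAddCommGroup H] [InnerProductSpace 𝕜 H]
    (v : ℕ → H) (c : ℝ) (k : ℕ) (p : (ℕ → ℕ) × (ℕ → H)) : Prop :=
  (∀ i j, i < j → j < k → p.1 i < p.1 j) ∧ (∀ i < k, ‖p.2 i‖ = 1) ∧
  (∀ i j, i < k → j < k → i ≠ j → (inner 𝕜 (p.2 i) (p.2 j) : 𝕜) = 0) ∧
  (∀ i < k, c ≤ ‖(inner 𝕜 (v (p.1 i)) (p.2 i) : 𝕜)‖)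

lemma gs_step {𝕜 H : Type*} [RCLike 𝕜] [NormedAddCommGroup H] [InnerProductSpace 𝕜 H]
    (v : ℕ → H) (ε M : ℝ) (hε : 0 < ε) (hεM : ε ≤ M)
    (hlow : ∀ k, ε ≤ ‖v k‖) (hup : ∀ k, ‖v k‖ ≤ M)
    (hweak : ∀ x : H, Tendsto (fun k => (inner 𝕜 (v k) x : 𝕜)) atTop (nhds 0))
    (k : ℕ) (p : (ℕ → ℕ) × (ℕ → H)) (hp : GSInv 𝕜 v (3*ε^2/(8*M)) k p) :
    ∃ q, (∀ i, i < k → q.1 i = p.1 i ∧ q.2 i = p.2 i) ∧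
      GSInv 𝕜 v (3*ε^2/(8*M)) (k+1) q := by
  obtain ⟨hp1, hp2, hp3, hp4⟩ := hp
  have hM : 0 < M := lt_of_lt_of_le hε hεM
  set δ : ℝ := ε^2/(4*(M+1)) with hδdef
  have hδ : 0 < δ := by positivity
  have hδ4 : δ ≤ ε/4 := by
    rw [hδdef, div_le_div_iff₀ (by positivity) (by norm_num)]
    nlinarith
  have hδM : δ ≤ M := hδ4.trans (by linarith)
  have hMδ : M * δ ≤ ε^2/4 := by
    have key : M * δ = (M/(M+1)) * (ε^2/4) := by
      rw [hδdef]; field_simp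
    rw [key]
    exact mul_le_of_le_one_left (by positivity) ((div_le_one (by linarith)).2 (by linarith))
  -- select the next index
  have hev1 : ∀ᶠ m in atTop, ∀ i ∈ Finset.range k,
      ‖(inner 𝕜 (p.2 i) (v m) : 𝕜)‖ < δ/(k+1) := by
    rw [eventually_all_finset]
    intro i _
    have h0 : Tendsto (fun m => ‖(inner 𝕜 (v m) (p.2 i) : 𝕜)‖) atTop (nhds 0) := by
      simpa using (hweak (p.2 i)).norm
    have := h0.eventually_lt_const (by positivity : (0:ℝ) < δ/(k+1))
    exact this.mono fun m hm => by rwa [norm_inner_symm]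
  have hev2 : ∀ᶠ m in atTop, ∀ i ∈ Finset.range k, p.1 i < m :=
    (eventually_all_finset _).2 fun i _ => eventually_gt_atTop _
  obtain ⟨m, hm1, hm2⟩ := (hev1.and hev2).exists
  set P : H := ∑ i ∈ Finset.range k, (inner 𝕜 (p.2 i) (v m) : 𝕜) • p.2 i with hPdef
  have hPnorm : ‖P‖ ≤ δ := by
    have hstep : ‖P‖ ≤ ∑ i ∈ Finset.range k, δ/(k+1) := by
      refine (norm_sum_le _ _).trans (Finset.sum_le_sum fun i hi => ?_)
      rw [norm_smul, hp2 i (Finset.mem_range.1 hi), mul_one]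
      exact (hm1 i hi).le
    have hk1 : (0:ℝ) < (k:ℝ)+1 := by positivity
    rw [Finset.sum_const, Finset.card_range, nsmul_eq_mul] at hstep
    refine hstep.trans ?_
    rw [mul_div_assoc', div_le_iff₀ hk1]
    nlinarith [hδ.le]
  set w : H := v m - P with hwdef
  have hw_ge : ε - δ ≤ ‖w‖ := by
    have := norm_sub_norm_le (v m) P
    have := hlow m
    linarith
  have hw_pos : 0 < ‖w‖ := by linarith
  have hw_le : ‖w‖ ≤ 2*M := by
    have := norm_sub_le (v m) P
    have := hup m
    linarith
  set c : 𝕜 := ((‖w‖⁻¹ : ℝ) : 𝕜) with hcdef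
  set ek : H := c • w with hekdef
  have hek_norm : ‖ek‖ = 1 := by
    rw [hekdef, norm_smul, hcdef, RCLike.norm_ofReal, abs_of_nonneg (by positivity),
      inv_mul_cancel₀ hw_pos.ne']
  have horthw : ∀ i, i < k → (inner 𝕜 (p.2 i) w : 𝕜) = 0 := by
    intro i hik
    rw [hwdef, inner_sub_right, hPdef, inner_sum]
    have hsum : ∑ j ∈ Finset.range k,
        (inner 𝕜 (p.2 i) ((inner 𝕜 (p.2 j) (v m) : 𝕜) • p.2 j) : 𝕜)
        = (inner 𝕜 (p.2 i) (v m) : 𝕜) := by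
      rw [Finset.sum_eq_single i]
      · rw [inner_smul_right, inner_self_eq_norm_sq_to_K, hp2 i hik]
        norm_num
      · intro j hj hji
        rw [inner_smul_right, hp3 i j hik (Finset.mem_range.1 hj) (Ne.symm hji), mul_zero]
      · intro hcon
        exact absurd (Finset.mem_range.2 hik) hcon
    rw [hsum, sub_self]
  have hinner_w : (3/4) * ε^2 ≤ ‖(inner 𝕜 (v m) w : 𝕜)‖ := by
    have h1 : (inner 𝕜 (v m) w : 𝕜) = (inner 𝕜 (v m) (v m) : 𝕜) - inner 𝕜 (v m) P := by
      rw [hwdef, inner_sub_right]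
    have h2 : ‖(inner 𝕜 (v m) P : 𝕜)‖ ≤ M * δ :=
      (norm_inner_le_norm _ _).trans
        (mul_le_mul (hup m) hPnorm (norm_nonneg _) hM.le)
    have h3 : ‖(inner 𝕜 (v m) (v m) : 𝕜)‖ = ‖v m‖^2 := by
      rw [inner_self_eq_norm_sq_to_K, norm_pow, RCLike.norm_ofReal, abs_norm]
    have h4 : ε^2 ≤ ‖v m‖^2 := pow_le_pow_left₀ hε.le (hlow m) 2
    have h5 : ‖(inner 𝕜 (v m) (v m) : 𝕜)‖ - ‖(inner 𝕜 (v m) P : 𝕜)‖ ≤ ‖(inner 𝕜 (v m) w : 𝕜)‖ := by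
      rw [h1]
      exact norm_sub_norm_le _ _
    linarith
  have hbound : 3*ε^2/(8*M) ≤ ‖(inner 𝕜 (v m) ek : 𝕜)‖ := by
    rw [hekdef, inner_smul_right, norm_mul, hcdef, RCLike.norm_ofReal,
      abs_of_nonneg (by positivity)]
    have hinv : (2*M)⁻¹ ≤ ‖w‖⁻¹ := inv_anti₀ hw_pos hw_le
    calc 3*ε^2/(8*M) = (2*M)⁻¹ * ((3/4)*ε^2) := by field_simp; ring
      _ ≤ ‖w‖⁻¹ * ‖(inner 𝕜 (v m) w : 𝕜)‖ :=
          mul_le_mul hinv hinner_w (by positivity) (by positivity)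
  refine ⟨(Function.update p.1 k m, Function.update p.2 k ek), ?_, ?_, ?_, ?_, ?_⟩
  · intro i hik
    exact ⟨Function.update_of_ne hik.ne _ _, Function.update_of_ne hik.ne _ _⟩
  · intro i j hij hjk
    rcases Nat.lt_succ_iff_lt_or_eq.1 hjk with hj | rfl
    · simp only [Function.update_of_ne (by omega : i ≠ k), Function.update_of_ne hj.ne]
      exact hp1 i j hij hj
    · simp only [Function.update_of_ne (by omega : i ≠ j), Function.update_self]
      exact hm2 i (Finset.mem_range.2 hij)
  · intro i hik
    rcases Nat.lt_succ_iff_lt_or_eq.1 hik with hi | rfl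
    · simp only [Function.update_of_ne hi.ne]
      exact hp2 i hi
    · simp only [Function.update_self]
      exact hek_norm
  · intro i j hik hjk hij
    rcases Nat.lt_succ_iff_lt_or_eq.1 hik with hi | rfl
    · rcases Nat.lt_succ_iff_lt_or_eq.1 hjk with hj | rfl
      · simp only [Function.update_of_ne hi.ne, Function.update_of_ne hj.ne]
        exact hp3 i j hi hj hij
      · simp only [Function.update_of_ne hi.ne, Function.update_self]
        rw [hekdef, inner_smul_right, horthw i hi, mul_zero]
    · rcases Nat.lt_succ_iff_lt_or_eq.1 hjk with hj | rfl
      · simp only [Function.update_of_ne hj.ne, Function.update_self]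
        rw [hekdef, inner_smul_left, inner_eq_zero_symm.1 (horthw j hj), mul_zero]
      · exact absurd rfl hij
  · intro i hik
    rcases Nat.lt_succ_iff_lt_or_eq.1 hik with hi | rfl
    · simp only [Function.update_of_ne hi.ne]
      exact hp4 i hi
    · simp only [Function.update_self]
      exact hbound

lemma exists_orthonormal_subseq {𝕜 H : Type*} [RCLike 𝕜] [NormedAddCommGroup H]
    [InnerProductSpace 𝕜 H]
    (v : ℕ → H) (ε M : ℝ) (hε : 0 < ε) (hεM : ε ≤ M)
    (hlow : ∀ k, ε ≤ ‖v k‖) (hup : ∀ k, ‖v k‖ ≤ M)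
    (hweak : ∀ x : H, Tendsto (fun k => (inner 𝕜 (v k) x : 𝕜)) atTop (nhds 0)) :
    ∃ (ψ : ℕ → ℕ) (e : ℕ → H), StrictMono ψ ∧ Orthonormal 𝕜 e ∧
      ∀ k, 3*ε^2/(8*M) ≤ ‖(inner 𝕜 (v (ψ k)) (e k) : 𝕜)‖ := by
  choose step hstep1 hstep2 using gs_step v ε M hε hεM hlow hup hweak
  have base : GSInv 𝕜 v (3*ε^2/(8*M)) 0 (fun _ => 0, fun _ => 0) := by
    refine ⟨?_, ?_, ?_, ?_⟩ <;> intros <;> omega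
  let s : ∀ k : ℕ, {p : (ℕ → ℕ) × (ℕ → H) // GSInv 𝕜 v (3*ε^2/(8*M)) k p} :=
    fun k => Nat.rec ⟨_, base⟩ (fun k ih => ⟨step k ih.1 ih.2, hstep2 k ih.1 ih.2⟩) k
  have hsucc : ∀ k, (s (k+1)).1 = step k (s k).1 (s k).2 := fun k => rfl
  have hagree : ∀ j k i, i < k → k ≤ j →
      (s j).1.1 i = (s k).1.1 i ∧ (s j).1.2 i = (s k).1.2 i := by
    intro j
    induction j with
    | zero =>
      intro k i hik hkj
      have : k = 0 := by omega
      subst this; exact ⟨rfl, rfl⟩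
    | succ j ihj =>
      intro k i hik hkj
      rcases eq_or_lt_of_le hkj with rfl | hlt
      · exact ⟨rfl, rfl⟩
      · have hkj' : k ≤ j := by omega
        have h1 := hstep1 j (s j).1 (s j).2 i (by omega)
        have h2 := ihj k i hik hkj'
        rw [hsucc j]
        exact ⟨h1.1.trans h2.1, h1.2.trans h2.2⟩
  set ψ : ℕ → ℕ := fun i => (s (i+1)).1.1 i with hψdef
  set e : ℕ → H := fun i => (s (i+1)).1.2 i with hedef
  have hψ : ∀ k i, i < k → (s k).1.1 i = ψ i :=
    fun k i hik => (hagree k (i+1) i (by omega) (by omega)).1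
  have he : ∀ k i, i < k → (s k).1.2 i = e i :=
    fun k i hik => (hagree k (i+1) i (by omega) (by omega)).2
  refine ⟨ψ, e, ?_, ?_, ?_⟩
  · intro a b hab
    have hinv := (s (b+1)).2.1 a b hab (by omega)
    rwa [hψ (b+1) a (by omega), hψ (b+1) b (by omega)] at hinv
  · rw [orthonormal_iff_ite]
    intro i j
    set k := max i j + 1 with hk
    have hik : i < k := by omega
    have hjk : j < k := by omega
    by_cases hij : i = j
    · subst hij
      simp only [if_pos rfl]
      have hn := (s k).2.2.1 i hik
      rw [he k i hik] at hn
      rw [inner_self_eq_norm_sq_to_K, hn]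
      norm_num
    · simp only [if_neg hij]
      have hz := (s k).2.2.2.1 i j hik hjk hij
      rwa [he k i hik, he k j hjk] at hz
  · intro k
    have hb := (s (k+1)).2.2.2.2 k (by omega)
    rwa [hψ (k+1) k (by omega), he (k+1) k (by omega)] at hb

theorem limited_of_limited_on_orthonormal_sequences
    {𝕜 H Y : Type*} [RCLike 𝕜] [NormedAddCommGroup H] [InnerProductSpace 𝕜 H]
    [CompleteSpace H] [NormedAddCommGroup Y] [NormedSpace 𝕜 Y] [CompleteSpace Y]
    (T : H →L[𝕜] Y)
    (h : ∀ x : ℕ → H, Orthonormal 𝕜 x → IsLimited 𝕜 (Set.range fun n => T (x n))) :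
    IsLimited 𝕜 (T '' Metric.closedBall (0 : H) 1) := by
  intro f hf ε hε
  by_contra hcon
  push_neg at hcon
  -- the functionals are uniformly bounded
  obtain ⟨C, hC⟩ : ∃ C, ∀ n, ‖f n‖ ≤ C := by
    apply banach_steinhaus
    intro y
    obtain ⟨C, hC⟩ := ((hf y).norm.bddAbove_range)
    exact ⟨C, fun n => hC ⟨n, rfl⟩⟩
  -- pull back through T and Riesz representation
  set u : ℕ → H := fun n => (InnerProductSpace.toDual 𝕜 H).symm ((f n).comp T) with hudef
  have hu : ∀ n x, (inner 𝕜 (u n) x : 𝕜) = f n (T x) := by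
    intro n x
    rw [hudef]
    exact InnerProductSpace.toDual_symm_apply
  have hu_bound : ∀ n, ‖u n‖ ≤ C * ‖T‖ := by
    intro n
    rw [hudef]
    calc ‖(InnerProductSpace.toDual 𝕜 H).symm ((f n).comp T)‖ = ‖(f n).comp T‖ :=
          LinearIsometryEquiv.norm_map _ _
      _ ≤ ‖f n‖ * ‖T‖ := ContinuousLinearMap.opNorm_comp_le _ _
      _ ≤ C * ‖T‖ := mul_le_mul_of_nonneg_right (hC n) (norm_nonneg _)
  have hu_weak : ∀ x : H, Tendsto (fun n => (inner 𝕜 (u n) x : 𝕜)) atTop (nhds 0) := by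
    intro x
    simpa only [hu] using hf (T x)
  -- frequently the norms are at least ε
  have hfreq : ∀ N, ∃ n > N, ε ≤ ‖u n‖ := by
    intro N
    obtain ⟨n, hn, a, ⟨x, hx, rfl⟩, hna⟩ := hcon (N+1)
    refine ⟨n, by omega, ?_⟩
    have hx1 : ‖x‖ ≤ 1 := by simpa [Metric.mem_closedBall, dist_eq_norm] using hx
    calc ε ≤ ‖f n (T x)‖ := hna
      _ = ‖(inner 𝕜 (u n) x : 𝕜)‖ := by rw [hu]
      _ ≤ ‖u n‖ * ‖x‖ := norm_inner_le_norm _ _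
      _ ≤ ‖u n‖ * 1 := mul_le_mul_of_nonneg_left hx1 (norm_nonneg _)
      _ = ‖u n‖ := mul_one _
  obtain ⟨φ, hφ, hφε⟩ := Nat.exists_strictMono_subsequence hfreq
  -- apply the orthonormal construction
  set M : ℝ := max (C * ‖T‖) ε with hMdef
  have hεM : ε ≤ M := le_max_right _ _
  obtain ⟨ψ, e, hψ, he, hbd⟩ :=
    exists_orthonormal_subseq (𝕜 := 𝕜) (u ∘ φ) ε M hε hεM
      (fun k => hφε k)
      (fun k => (hu_bound (φ k)).trans (le_max_left _ _))
      (fun x => (hu_weak x).comp hφ.tendsto_atTop)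
  set c : ℝ := 3*ε^2/(8*M) with hcdef
  have hc : 0 < c := by
    have hM : 0 < M := lt_of_lt_of_le hε hεM
    positivity
  obtain ⟨N, hN⟩ := h e he f hf c hc
  have hkey := hbd N
  have hmono : StrictMono (fun k => φ (ψ k)) := hφ.comp hψ
  have hge : N ≤ φ (ψ N) := hmono.le_apply
  have := hN (φ (ψ N)) hge (T (e N)) ⟨N, rfl⟩
  rw [← hu (φ (ψ N)) (e N)] at this
  exact absurd hkey (not_le.2 this)
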